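/- arXiv:2301.03468 — 2 statements merged into one kernel-verified Lean document; each statement's English description precedes it below -/
import Mathlib

section
/- (Sufficiency direction of the knapsack-to-DAP reduction, from the proof of Theorem 1.) Assume every user's budget exceeds every selling cost: c i ≤ b j for all i ∈ Fin G and j ∈ Fin J. Let x : Fin G → ℕ satisfy ∑_{i} x i = J, ∑_{i} z i * x i ≤ Z, and ∑_{i} c i * x i ≥ L + ∑_{i} d i. Then there exists an allocation V : Fin G → Fin J → ℕ with V i j ∈ {0,1}, such that: for every j, ∑_{i} V i j = 1; for every i, ∑_{j} V i j = x i; the size constraint ∑_{i} z i * (∑_{j} V i j) ≤ Z holds; the affordability constraint (V i j = 1 → c i ≤ b j) holds; and the profit satisfies ∑_{i} (c i * (∑_{j} V i j) − d i) ≥ L. -/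
/-- Sufficiency direction of the knapsack-to-DAP reduction (proof of
Theorem 1): under large budgets, a knapsack solution `x` with `∑ i, x i = J`,
weight at most `Z`, and value at least `L + ∑ i, d i` yields a feasible DAP
allocation with profit at least `L`. -/
theorem knapsack_to_dap_sufficiency
    (G J : ℕ) (c z d : Fin G → ℝ) (Z L : ℝ) (b : Fin J → ℝ)
    (hbudget : ∀ (i : Fin G) (j : Fin J), c i ≤ b j)
    (x : Fin G → ℕ)
    (hxJ : ∑ i, x i = J)
    (hweight : ∑ i, z i * ((x i : ℕ) : ℝ) ≤ Z)
    (hvalue : ∑ i, c i * ((x i : ℕ) : ℝ) ≥ L + ∑ i, d i) :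
    ∃ V : Fin G → Fin J → ℕ,
      (∀ i j, V i j = 0 ∨ V i j = 1) ∧
      (∀ j, ∑ i, V i j = 1) ∧
      (∀ i, ∑ j, V i j = x i) ∧
      (∑ i, z i * ((∑ j, V i j : ℕ) : ℝ) ≤ Z) ∧
      (∀ i j, V i j = 1 → c i ≤ b j) ∧
      (∑ i, (c i * ((∑ j, V i j : ℕ) : ℝ) - d i) ≥ L) := by
  have hcard : Fintype.card (Σ i : Fin G, Fin (x i)) = J := by
    simp [Fintype.card_sigma, hxJ]
  let e : (Σ i : Fin G, Fin (x i)) ≃ Fin J := Fintype.equivFinOfCardEq hcard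
  set V : Fin G → Fin J → ℕ := fun i j => if (e.symm j).1 = i then 1 else 0 with hV
  have hcol : ∀ i, ∑ j, V i j = x i := by
    intro i
    rw [hV]
    rw [← Equiv.sum_comp e (fun j => if (e.symm j).1 = i then 1 else 0)]
    simp only [Equiv.symm_apply_apply]
    rw [← Finset.univ_sigma_univ, Finset.sum_sigma]
    simp [apply_ite Finset.card, Finset.sum_ite_eq]
  refine ⟨V, ?_, ?_, hcol, ?_, ?_, ?_⟩
  · intro i j; rw [hV]; dsimp only; split <;> simp
  · intro j; rw [hV]; simp
  · simpa only [hcol] using hweight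
  · intro i j _; exact hbudget i j
  · simp only [hcol, Finset.sum_sub_distrib]
    linarith
end

section
/- (Optimality of the best-affordable allocation when the storage constraint is slack, Section V-A.) Assume the costs c : Fin G → ℝ are strictly increasing and every budget satisfies b j ≥ c 0. For each user j let k j ∈ Fin G be the largest index i with c i ≤ b j. Assume ∑_{j} z (k j) ≤ Z. Define V* : Fin G → Fin J → ℕ by V* i j = 1 if i = k j and V* i j = 0 otherwise. Then V* is a feasible allocation, and for every feasible allocation V, the profit satisfies ∑_{i} (c i * (∑_{j} V i j) − d i) ≤ ∑_{i} (c i * (∑_{j} V* i j) − d i); i.e., V* is an optimal solution of the DAP. -/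
lemma star_sum_eq {G J : ℕ} (k : Fin J → Fin G) (Vstar : Fin G → Fin J → ℕ)
    (hVstar : ∀ i j, Vstar i j = if i = k j then 1 else 0) (w : Fin G → ℝ) :
    ∑ i, w i * ((∑ j, Vstar i j : ℕ) : ℝ) = ∑ j, w (k j) := by
  have : ∀ i, ((∑ j, Vstar i j : ℕ) : ℝ) = ∑ j : Fin J, (Vstar i j : ℝ) := by
    intro i; push_cast; ring
  simp_rw [this, Finset.mul_sum]
  rw [Finset.sum_comm]
  refine Finset.sum_congr rfl fun j _ => ?_
  simp_rw [hVstar]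
  rw [Finset.sum_eq_single (k j)]
  · simp
  · intro i _ hi; simp [hi]
  · simp

/-- Optimality of the best-affordable allocation when the storage constraint
is slack (Section V-A): if each user `j` gets the largest category `k j` it can
afford and the total size `∑ j, z (k j)` fits within `Z`, then the resulting
0/1 allocation `V*` is feasible and maximizes profit among all feasible
allocations. -/
theorem best_affordable_allocation_optimal
    (G J : ℕ) (hG : 0 < G)
    (c z d : Fin G → ℝ) (Z : ℝ) (b : Fin J → ℝ)
    (hc_mono : StrictMono c)
    (hb : ∀ j, c ⟨0, hG⟩ ≤ b j)
    (k : Fin J → Fin G)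
    (hk_afford : ∀ j, c (k j) ≤ b j)
    (hk_max : ∀ (j : Fin J) (i : Fin G), c i ≤ b j → i ≤ k j)
    (hslack : ∑ j, z (k j) ≤ Z)
    (Vstar : Fin G → Fin J → ℕ)
    (hVstar : ∀ i j, Vstar i j = if i = k j then 1 else 0) :
    ((∀ i j, Vstar i j = 0 ∨ Vstar i j = 1) ∧
     (∀ j, ∑ i, Vstar i j = 1) ∧
     (∀ i j, Vstar i j = 1 → c i ≤ b j) ∧
     (∑ i, z i * ((∑ j, Vstar i j : ℕ) : ℝ) ≤ Z)) ∧
    (∀ V : Fin G → Fin J → ℕ,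
      (∀ i j, V i j = 0 ∨ V i j = 1) →
      (∀ j, ∑ i, V i j = 1) →
      (∀ i j, V i j = 1 → c i ≤ b j) →
      (∑ i, z i * ((∑ j, V i j : ℕ) : ℝ) ≤ Z) →
      ∑ i, (c i * ((∑ j, V i j : ℕ) : ℝ) - d i) ≤
        ∑ i, (c i * ((∑ j, Vstar i j : ℕ) : ℝ) - d i)) := by
  constructor
  · refine ⟨?_, ?_, ?_, ?_⟩
    · intro i j; rw [hVstar]; split <;> simp
    · intro j
      simp_rw [hVstar]
      rw [Finset.sum_eq_single (k j)] <;> simp +contextual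
    · intro i j h
      rw [hVstar] at h
      split at h
      · subst ‹i = k j›; exact hk_afford j
      · simp at h
    · rw [star_sum_eq k Vstar hVstar z]; exact hslack
  · intro V h01 hsum haff _
    simp only [Finset.sum_sub_distrib]
    apply sub_le_sub_right
    rw [star_sum_eq k Vstar hVstar c]
    have key : ∀ i, ((∑ j, V i j : ℕ) : ℝ) = ∑ j : Fin J, (V i j : ℝ) := by
      intro i; push_cast; ring
    simp_rw [key, Finset.mul_sum]
    rw [Finset.sum_comm]
    refine Finset.sum_le_sum fun j _ => ?_
    -- find the unique i with V i j = 1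
    have hpos : ∑ i, V i j = 1 := hsum j
    have : ∃ i, V i j = 1 := by
      by_contra h
      push_neg at h
      have : ∀ i, V i j = 0 := fun i => (h01 i j).resolve_right (h i)
      simp [this] at hpos
    obtain ⟨i0, hi0⟩ := this
    have hz : ∀ i', i' ≠ i0 → V i' j = 0 := by
      intro i' hne
      rcases h01 i' j with h0 | h1
      · exact h0
      · exfalso
        have : 2 ≤ ∑ i, V i j := by
          calc 2 = V i0 j + V i' j := by rw [hi0, h1]
          _ = ∑ i ∈ {i0, i'}, V i j := by
              rw [Finset.sum_pair (Ne.symm hne)]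
          _ ≤ ∑ i, V i j := Finset.sum_le_sum_of_subset (Finset.subset_univ _)
        omega
    have : ∑ i, c i * (V i j : ℝ) = c i0 := by
      rw [Finset.sum_eq_single i0]
      · rw [hi0]; simp
      · intro i' _ hne; rw [hz i' hne]; simp
      · simp
    rw [this]
    exact hc_mono.monotone (hk_max j i0 (haff i0 j hi0))
end
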